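/- Let f : 𝔻 → 𝔻 be holomorphic with f(z) = z + o(|1-z|³) as z → 1 in 𝔻 (unrestricted approach, i.e. (f(z)-z)/|1-z|³ → 0 as z → 1 in 𝔻). Then f(z) = z for all z ∈ 𝔻. -/

import Mathlib

open Complex Filter MeasureTheory Metric Set Topology

noncomputable section

/-- The open unit disk in `ℂ`. -/
def unitDisk : Set ℂ := {z : ℂ | ‖z‖ < 1}

/-- The Laplacian of a real-valued function on `ℂ ≅ ℝ²`. -/
def lap (u : ℂ → ℝ) (z : ℂ) : ℝ :=
  fderiv ℝ (fun w => fderiv ℝ u w 1) z 1 +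
  fderiv ℝ (fun w => fderiv ℝ u w Complex.I) z Complex.I

/-- The Gauss curvature `κ_λ = -Δ(log λ)/λ²` of a conformal pseudometric `λ(z)|dz|`. -/
def curv (lam : ℂ → ℝ) (z : ℂ) : ℝ :=
  -(lap (fun w => Real.log (lam w)) z) / (lam z) ^ 2

/-- A conformal pseudometric on the unit disk: continuous, nonnegative, and C² where positive. -/
structure IsConfPseudometric (lam : ℂ → ℝ) : Prop where
  cont : ContinuousOn lam unitDisk
  nonneg : ∀ z ∈ unitDisk, 0 ≤ lam z
  smooth : ContDiffOn ℝ 2 lam {z : ℂ | z ∈ unitDisk ∧ 0 < lam z}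

lemma cmul_self_norm (z : ℂ) : ‖z‖ * ‖z‖ = Complex.normSq z := by
  rw [← sq, Complex.sq_norm]

lemma unitDisk_eq : unitDisk = Metric.ball (0:ℂ) 1 := by
  ext z; simp [unitDisk, mem_ball_zero_iff]

lemma mobius_key (a z : ℂ) :
    Complex.normSq (1 - (starRingEnd ℂ) a * z) - Complex.normSq (a - z)
      = (1 - Complex.normSq a) * (1 - Complex.normSq z) := by
  have h : ((Complex.normSq (1 - (starRingEnd ℂ) a * z) - Complex.normSq (a - z) : ℝ) : ℂ)
      = (((1 - Complex.normSq a) * (1 - Complex.normSq z) : ℝ) : ℂ) := by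
    push_cast
    rw [← Complex.mul_conj, ← Complex.mul_conj, ← Complex.mul_conj, ← Complex.mul_conj]
    simp only [map_sub, map_mul, map_one, Complex.conj_conj]
    ring
  exact_mod_cast h

lemma one_sub_conj_mul_ne {a z : ℂ} (ha : ‖a‖ < 1) (hz : ‖z‖ < 1) :
    1 - (starRingEnd ℂ) a * z ≠ 0 := by
  intro h
  have h3 : (starRingEnd ℂ) a * z = 1 := by
    have := sub_eq_zero.mp h; exact this.symm
  have h2 : ‖(starRingEnd ℂ) a * z‖ < 1 := by
    rw [norm_mul, Complex.norm_conj]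
    nlinarith [norm_nonneg a, norm_nonneg z]
  rw [h3, norm_one] at h2; linarith

lemma mobius_mem {a z : ℂ} (ha : ‖a‖ < 1) (hz : ‖z‖ < 1) :
    ‖(a - z) / (1 - (starRingEnd ℂ) a * z)‖ < 1 := by
  have hne := one_sub_conj_mul_ne ha hz
  have hlt : Complex.normSq (a - z) < Complex.normSq (1 - (starRingEnd ℂ) a * z) := by
    have := mobius_key a z
    have h1 : 0 < 1 - Complex.normSq a := by
      rw [← Complex.sq_norm]; nlinarith [norm_nonneg a]
    have h2 : 0 < 1 - Complex.normSq z := by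
      rw [← Complex.sq_norm]; nlinarith [norm_nonneg z]
    nlinarith
  rw [norm_div, div_lt_one (by simpa using (norm_pos_iff.mpr hne))]
  rw [Complex.norm_def, Complex.norm_def]
  exact Real.sqrt_lt_sqrt (Complex.normSq_nonneg _) hlt

lemma abs_lt_one_of_normSq {a : ℂ} (ha : ‖a‖ < 1) : Complex.normSq a < 1 := by
  rw [← Complex.sq_norm]; nlinarith [norm_nonneg a]

lemma mobius_invol {a z : ℂ} (ha : ‖a‖ < 1) (hz : ‖z‖ < 1) :
    (a - (a - z) / (1 - (starRingEnd ℂ) a * z)) /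
      (1 - (starRingEnd ℂ) a * ((a - z) / (1 - (starRingEnd ℂ) a * z))) = z := by
  have hd := one_sub_conj_mul_ne ha hz
  have h1 : (1 : ℂ) - (starRingEnd ℂ) a * a ≠ 0 := by
    have := one_sub_conj_mul_ne ha ha; exact this
  rw [div_eq_iff]
  · have hq := div_mul_cancel₀ (a - z) hd
    linear_combination (-1 : ℂ) * hq
  · intro h
    apply h1
    have : 1 - (starRingEnd ℂ) a * ((a - z) / (1 - (starRingEnd ℂ) a * z))
        = (1 - (starRingEnd ℂ) a * a) / (1 - (starRingEnd ℂ) a * z) := by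
      field_simp
      ring
    rw [this] at h
    have := div_eq_zero_iff.mp h
    rcases this with h' | h'
    · exact h'
    · exact absurd h' hd

noncomputable def mob (a z : ℂ) : ℂ := (a - z) / (1 - (starRingEnd ℂ) a * z)

lemma mob_mem {a z : ℂ} (ha : ‖a‖ < 1) (hz : ‖z‖ < 1) :
    ‖mob a z‖ < 1 := mobius_mem ha hz

lemma mob_invol {a z : ℂ} (ha : ‖a‖ < 1) (hz : ‖z‖ < 1) :
    mob a (mob a z) = z := mobius_invol ha hz

lemma mob_diffOn {a : ℂ} (ha : ‖a‖ < 1) :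
    DifferentiableOn ℂ (mob a) unitDisk := by
  apply DifferentiableOn.div
  · exact (differentiable_const a).differentiableOn.sub differentiable_id.differentiableOn
  · exact (differentiable_const (1:ℂ)).differentiableOn.sub
      ((differentiable_const _).mul differentiable_id).differentiableOn
  · intro z hz
    exact one_sub_conj_mul_ne ha hz

lemma schwarz_pick {f : ℂ → ℂ} (hf : DifferentiableOn ℂ f unitDisk)
    (hm : Set.MapsTo f unitDisk unitDisk)
    {a z : ℂ} (ha : a ∈ unitDisk) (hz : z ∈ unitDisk) :
    ‖mob (f a) (f z)‖ ≤ ‖mob a z‖ := by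
  have ha' : ‖a‖ < 1 := ha
  have hz' : ‖z‖ < 1 := hz
  have hfa : f a ∈ unitDisk := hm ha
  set g : ℂ → ℂ := fun w => mob (f a) (f (mob a w)) with hg
  have hmapsmob : Set.MapsTo (mob a) unitDisk unitDisk := fun w hw => mob_mem ha' hw
  have hgd : DifferentiableOn ℂ g unitDisk := by
    apply DifferentiableOn.comp (mob_diffOn hfa)
    · exact DifferentiableOn.comp hf (mob_diffOn ha') hmapsmob
    · exact fun w hw => hm (hmapsmob hw)
  have hgm : Set.MapsTo g unitDisk unitDisk := fun w hw => mob_mem hfa (hm (hmapsmob hw))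
  have hg0 : g 0 = 0 := by
    have : mob a 0 = a := by simp [mob]
    simp only [hg, this]
    simp [mob]
  have key : ∀ w ∈ unitDisk, ‖g w‖ ≤ ‖w‖ := by
    intro w hw
    rw [unitDisk_eq] at hgd hgm
    have := Complex.norm_le_norm_of_mapsTo_ball hgd (hgm.mono_right ball_subset_closedBall) hg0 (R := 1) (z := w) (by exact hw)
    exact this
  have hmz : mob a z ∈ unitDisk := mob_mem ha' hz'
  have := key (mob a z) hmz
  have heq : g (mob a z) = mob (f a) (f z) := by
    simp only [hg]
    rw [mob_invol ha' hz']
  rwa [heq] at this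

lemma sp_normSq {f : ℂ → ℂ} (hf : DifferentiableOn ℂ f unitDisk)
    (hm : Set.MapsTo f unitDisk unitDisk)
    {a z : ℂ} (ha : a ∈ unitDisk) (hz : z ∈ unitDisk) :
    (1 - Complex.normSq a) * (1 - Complex.normSq z)
        * Complex.normSq (1 - (starRingEnd ℂ) (f a) * f z)
      ≤ (1 - Complex.normSq (f a)) * (1 - Complex.normSq (f z))
        * Complex.normSq (1 - (starRingEnd ℂ) a * z) := by
  have hsp := schwarz_pick hf hm ha hz
  have hfa : f a ∈ unitDisk := hm ha
  have hfz : f z ∈ unitDisk := hm hz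
  have hB : 0 < Complex.normSq (1 - (starRingEnd ℂ) a * z) :=
    Complex.normSq_pos.mpr (one_sub_conj_mul_ne ha hz)
  have hB' : 0 < Complex.normSq (1 - (starRingEnd ℂ) (f a) * f z) :=
    Complex.normSq_pos.mpr (one_sub_conj_mul_ne hfa hfz)
  have h1 : Complex.normSq (f a - f z) / Complex.normSq (1 - (starRingEnd ℂ) (f a) * f z)
      ≤ Complex.normSq (a - z) / Complex.normSq (1 - (starRingEnd ℂ) a * z) := by
    have h := mul_self_le_mul_self (norm_nonneg _) hsp
    simp only [mob] at h
    rw [cmul_self_norm, cmul_self_norm, Complex.normSq_div, Complex.normSq_div] at h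
    exact h
  have e1 : (1 - Complex.normSq a) * (1 - Complex.normSq z)
        / Complex.normSq (1 - (starRingEnd ℂ) a * z)
      = 1 - Complex.normSq (a - z) / Complex.normSq (1 - (starRingEnd ℂ) a * z) := by
    have hA : (1 - Complex.normSq a) * (1 - Complex.normSq z)
        = Complex.normSq (1 - (starRingEnd ℂ) a * z) - Complex.normSq (a - z) := by
      linarith [mobius_key a z]
    rw [hA, sub_div, div_self hB.ne']
  have e2 : (1 - Complex.normSq (f a)) * (1 - Complex.normSq (f z))
        / Complex.normSq (1 - (starRingEnd ℂ) (f a) * f z)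
      = 1 - Complex.normSq (f a - f z) / Complex.normSq (1 - (starRingEnd ℂ) (f a) * f z) := by
    have hA : (1 - Complex.normSq (f a)) * (1 - Complex.normSq (f z))
        = Complex.normSq (1 - (starRingEnd ℂ) (f a) * f z) - Complex.normSq (f a - f z) := by
      linarith [mobius_key (f a) (f z)]
    rw [hA, sub_div, div_self hB'.ne']
  have h2 : (1 - Complex.normSq a) * (1 - Complex.normSq z)
        / Complex.normSq (1 - (starRingEnd ℂ) a * z)
      ≤ (1 - Complex.normSq (f a)) * (1 - Complex.normSq (f z))
        / Complex.normSq (1 - (starRingEnd ℂ) (f a) * f z) := by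
    rw [e1, e2]; linarith
  exact (div_le_div_iff₀ hB hB').mp h2

lemma mem_ne_one {w : ℂ} (hw : w ∈ unitDisk) : w ≠ 1 := by
  intro h; have : ‖w‖ < 1 := hw; rw [h] at this; simp at this

lemma one_sub_ne_zero {w : ℂ} (hw : w ∈ unitDisk) : (1 : ℂ) - w ≠ 0 :=
  sub_ne_zero.mpr (Ne.symm (mem_ne_one hw))

lemma re_cayley {w : ℂ} (hw : w ≠ 1) :
    ((1 + w) / (1 - w)).re = (1 - Complex.normSq w) / Complex.normSq (1 - w) := by
  rw [Complex.div_re, ← add_div]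
  congr 1
  simp [Complex.normSq_apply]
  ring

lemma cayley_sub {w z : ℂ} (hw : w ≠ 1) (hz : z ≠ 1) :
    (1 + w) / (1 - w) - (1 + z) / (1 - z) = 2 * (w - z) / ((1 - w) * (1 - z)) := by
  have hw' : (1:ℂ) - w ≠ 0 := sub_ne_zero.mpr (Ne.symm hw)
  have hz' : (1:ℂ) - z ≠ 0 := sub_ne_zero.mpr (Ne.symm hz)
  field_simp
  ring

lemma normSq_pm_one (w : ℂ) :
    Complex.normSq (w + 1) - Complex.normSq (w - 1) = 4 * w.re := by
  simp [Complex.normSq_apply]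
  ring

lemma normSq_pm_conj (w a : ℂ) :
    Complex.normSq (w + (starRingEnd ℂ) a) - Complex.normSq (w - a) = 4 * w.re * a.re := by
  simp [Complex.normSq_apply]
  ring


set_option maxHeartbeats 1000000 in
/-- **The boundary Schwarz lemma of Burns and Krantz.**
If `f : 𝔻 → 𝔻` is holomorphic and `f(z) = z + o(|1-z|³)` as `z → 1` in `𝔻`
(unrestricted approach), then `f(z) = z` for all `z ∈ 𝔻`. -/
theorem burns_krantz
    (f : ℂ → ℂ) (hf : DifferentiableOn ℂ f unitDisk)
    (hmaps : Set.MapsTo f unitDisk unitDisk)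
    (ho : Tendsto (fun z => (f z - z) / ((‖1 - z‖ : ℂ)) ^ 3)
      (nhdsWithin 1 unitDisk) (𝓝 0)) :
    ∀ z ∈ unitDisk, f z = z := by
  have hopen : IsOpen unitDisk := by rw [unitDisk_eq]; exact isOpen_ball
  have hconn : IsPreconnected unitDisk := by
    rw [unitDisk_eq]; exact (convex_ball _ _).isPreconnected
  -- the sequence along the radius
  set d : ℕ → ℝ := fun n => 1 / (n + 2 : ℝ) with hd_def
  set u : ℕ → ℂ := fun n => ((1 - d n : ℝ) : ℂ) with hu_def
  have hd_pos : ∀ n, 0 < d n := fun n => by positivity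
  have hd_le : ∀ n, d n ≤ 1 / 2 := fun n => by
    rw [hd_def]
    rw [div_le_div_iff₀ (by positivity) (by norm_num)]
    norm_num
  have hu_mem : ∀ n, u n ∈ unitDisk := by
    intro n
    have h : ‖u n‖ = 1 - d n := by
      rw [hu_def]
      rw [Complex.norm_real, Real.norm_eq_abs]
      exact _root_.abs_of_nonneg (by linarith [hd_le n])
    show ‖u n‖ < 1
    rw [h]; linarith [hd_pos n]
  have h1u : ∀ n, (1 : ℂ) - u n = ((d n : ℝ) : ℂ) := by
    intro n; rw [hu_def]; push_cast; ring
  have habs1u : ∀ n, ‖1 - u n‖ = d n := by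
    intro n; rw [h1u n, Complex.norm_real, Real.norm_eq_abs, _root_.abs_of_pos (hd_pos n)]
  have hd0 : Tendsto d atTop (𝓝 0) := by
    apply squeeze_zero (fun n => (hd_pos n).le) (g := fun n : ℕ => 1 / ((n : ℝ) + 1))
    · intro n
      rw [hd_def]
      apply div_le_div_of_nonneg_left (by norm_num) (by positivity) (by linarith)
    · exact tendsto_one_div_add_atTop_nhds_zero_nat
  have hu1 : Tendsto u atTop (𝓝[unitDisk] (1 : ℂ)) := by
    rw [tendsto_nhdsWithin_iff]
    constructor
    · have : Tendsto (fun n => (1 - d n : ℝ)) atTop (𝓝 1) := by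
        simpa using tendsto_const_nhds.sub hd0
      have := (Complex.continuous_ofReal.tendsto (1 : ℝ)).comp this
      rw [Complex.ofReal_one] at this; exact this
    · exact Eventually.of_forall hu_mem
  -- the error term
  set ε : ℕ → ℝ := fun n => ‖f (u n) - u n‖ / d n ^ 3 with hε_def
  have hε_nonneg : ∀ n, 0 ≤ ε n := fun n => by positivity
  have hε : Tendsto ε atTop (𝓝 0) := by
    have h0 := ho.comp hu1
    have h1 := (continuous_norm.tendsto 0).comp h0
    simp only [Function.comp_def] at h1
    rw [norm_zero] at h1
    apply h1.congr
    intro n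
    simp only [Function.comp_apply, norm_div, norm_pow, habs1u n, Complex.norm_real, Real.norm_eq_abs,
      _root_.abs_of_pos (hd_pos n)]
    rfl
  have hEeq : ∀ n, ‖f (u n) - u n‖ = ε n * d n ^ 3 := by
    intro n
    rw [hε_def]
    exact (div_mul_cancel₀ _ (pow_ne_zero 3 (hd_pos n).ne')).symm
  have hE0 : Tendsto (fun n => ‖f (u n) - u n‖) atTop (𝓝 0) := by
    have : Tendsto (fun n => ε n * d n ^ 3) atTop (𝓝 0) := by
      simpa using hε.mul (hd0.pow 3)
    exact this.congr fun n => (hEeq n).symm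
  have hfu : Tendsto (fun n => f (u n)) atTop (𝓝 1) := by
    have h1 : Tendsto (fun n => f (u n) - u n) atTop (𝓝 0) := by
      rw [tendsto_zero_iff_norm_tendsto_zero]
      exact hE0
    have h2 : Tendsto u atTop (𝓝 1) :=
      hu1.mono_right nhdsWithin_le_nhds
    simpa using h1.add h2
  have hnsqu : ∀ n, Complex.normSq (u n) = (1 - d n) ^ 2 := by
    intro n; rw [hu_def]; rw [Complex.normSq_ofReal]; ring
  have hden_pos : ∀ n, 0 < 1 - Complex.normSq (u n) := by
    intro n; rw [hnsqu n]; nlinarith [hd_pos n, hd_le n]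
  have hratio : Tendsto (fun n => (1 - Complex.normSq (f (u n))) / (1 - Complex.normSq (u n)))
      atTop (𝓝 1) := by
    have hbound : ∀ n,
        ‖(1 - Complex.normSq (f (u n))) / (1 - Complex.normSq (u n)) - 1‖ ≤ 2 * ε n := by
      intro n
      have habsu : ‖u n‖ = 1 - d n := by
        rw [hu_def]
        rw [Complex.norm_real, Real.norm_eq_abs]
        exact _root_.abs_of_nonneg (by linarith [hd_le n])
      have hfu_lt : ‖f (u n)‖ < 1 := hmaps (hu_mem n)
      have h2 : |‖u n‖ - ‖f (u n)‖| ≤ ‖f (u n) - u n‖ := by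
        rw [abs_sub_comm]
        exact abs_norm_sub_norm_le _ _
      have h1 : |Complex.normSq (u n) - Complex.normSq (f (u n))| ≤ 2 * (ε n * d n ^ 3) := by
        have e1 : Complex.normSq (u n) - Complex.normSq (f (u n))
            = (‖u n‖ - ‖f (u n)‖)
              * (‖u n‖ + ‖f (u n)‖) := by
          rw [← Complex.sq_norm, ← Complex.sq_norm]; ring
        rw [e1, abs_mul]
        have h3 : |‖u n‖ + ‖f (u n)‖| ≤ 2 := by
          rw [_root_.abs_of_nonneg (by positivity)]
          have : ‖u n‖ < 1 := hu_mem n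
          linarith
        have h4 := hEeq n
        calc |‖u n‖ - ‖f (u n)‖|
              * |‖u n‖ + ‖f (u n)‖|
            ≤ ‖f (u n) - u n‖ * 2 := by
              apply mul_le_mul h2 h3 (abs_nonneg _) (norm_nonneg _)
          _ = 2 * (ε n * d n ^ 3) := by rw [h4]; ring
      have e3 : (1 - Complex.normSq (f (u n))) / (1 - Complex.normSq (u n)) - 1
          = (Complex.normSq (u n) - Complex.normSq (f (u n))) / (1 - Complex.normSq (u n)) := by
        rw [div_sub_one (hden_pos n).ne']
        congr 1
        ring
      rw [Real.norm_eq_abs, e3, abs_div, _root_.abs_of_pos (hden_pos n), div_le_iff₀ (hden_pos n)]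
      have h5 : 1 - Complex.normSq (u n) = d n * (2 - d n) := by rw [hnsqu n]; ring
      calc |Complex.normSq (u n) - Complex.normSq (f (u n))| ≤ 2 * (ε n * d n ^ 3) := h1
        _ ≤ 2 * ε n * (1 - Complex.normSq (u n)) := by
            rw [h5]
            have h7 : d n ^ 2 ≤ d n := by
              nlinarith [mul_nonneg (hd_pos n).le (by linarith [hd_le n] : (0:ℝ) ≤ 1 - d n)]
            have hcube : d n ^ 3 ≤ d n * (2 - d n) := by
              nlinarith [mul_le_mul_of_nonneg_left h7 (hd_pos n).le, h7, hd_pos n]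
            calc 2 * (ε n * d n ^ 3) ≤ 2 * (ε n * (d n * (2 - d n))) := by
                  apply mul_le_mul_of_nonneg_left _ (by norm_num)
                  exact mul_le_mul_of_nonneg_left hcube (hε_nonneg n)
              _ = 2 * ε n * (d n * (2 - d n)) := by ring
    have h5 : Tendsto (fun n =>
        (1 - Complex.normSq (f (u n))) / (1 - Complex.normSq (u n)) - 1) atTop (𝓝 0) :=
      squeeze_zero_norm hbound (by simpa using hε.const_mul 2)
    have h6 := h5.add_const 1
    simpa using h6
  have hconju : ∀ n, (starRingEnd ℂ) (u n) = u n := by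
    intro n; rw [hu_def]; exact Complex.conj_ofReal _
  have hjulia : ∀ w ∈ unitDisk,
      (1 - Complex.normSq w) * Complex.normSq (1 - f w)
        ≤ (1 - Complex.normSq (f w)) * Complex.normSq (1 - w) := by
    intro w hw
    have hineq : ∀ n,
        (1 - Complex.normSq w) * Complex.normSq (1 - (starRingEnd ℂ) (f (u n)) * f w)
          ≤ ((1 - Complex.normSq (f (u n))) / (1 - Complex.normSq (u n)))
            * ((1 - Complex.normSq (f w)) * Complex.normSq (1 - (starRingEnd ℂ) (u n) * w)) := by
      intro n
      have h := sp_normSq hf hmaps (hu_mem n) hw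
      rw [div_mul_eq_mul_div, le_div_iff₀ (hden_pos n)]
      calc (1 - Complex.normSq w) * Complex.normSq (1 - (starRingEnd ℂ) (f (u n)) * f w)
            * (1 - Complex.normSq (u n))
          = (1 - Complex.normSq (u n)) * (1 - Complex.normSq w)
            * Complex.normSq (1 - (starRingEnd ℂ) (f (u n)) * f w) := by ring
        _ ≤ (1 - Complex.normSq (f (u n))) * (1 - Complex.normSq (f w))
            * Complex.normSq (1 - (starRingEnd ℂ) (u n) * w) := h
        _ = (1 - Complex.normSq (f (u n)))
            * ((1 - Complex.normSq (f w)) * Complex.normSq (1 - (starRingEnd ℂ) (u n) * w)) := by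
            ring
    have hcfu : Tendsto (fun n => 1 - (starRingEnd ℂ) (f (u n)) * f w) atTop (𝓝 (1 - f w)) := by
      have hc1 : Tendsto (fun n => (starRingEnd ℂ) (f (u n))) atTop (𝓝 1) := by
        have := (Complex.continuous_conj.tendsto 1).comp hfu
        simpa [Function.comp_def] using this
      have := hc1.mul (tendsto_const_nhds (x := f w))
      rw [one_mul] at this
      exact tendsto_const_nhds.sub this
    have hL : Tendsto (fun n =>
        (1 - Complex.normSq w) * Complex.normSq (1 - (starRingEnd ℂ) (f (u n)) * f w))
        atTop (𝓝 ((1 - Complex.normSq w) * Complex.normSq (1 - f w))) :=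
      tendsto_const_nhds.mul ((Complex.continuous_normSq.tendsto _).comp hcfu)
    have hcu : Tendsto (fun n => 1 - (starRingEnd ℂ) (u n) * w) atTop (𝓝 (1 - w)) := by
      have hu' : Tendsto u atTop (𝓝 1) := hu1.mono_right nhdsWithin_le_nhds
      have : Tendsto (fun n => (starRingEnd ℂ) (u n) * w) atTop (𝓝 w) := by
        have := ((Complex.continuous_conj.tendsto 1).comp hu').mul (tendsto_const_nhds (x := w))
        simpa using this
      exact tendsto_const_nhds.sub this
    have hR : Tendsto (fun n =>
        ((1 - Complex.normSq (f (u n))) / (1 - Complex.normSq (u n)))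
          * ((1 - Complex.normSq (f w)) * Complex.normSq (1 - (starRingEnd ℂ) (u n) * w)))
        atTop (𝓝 (1 * ((1 - Complex.normSq (f w)) * Complex.normSq (1 - w)))) :=
      hratio.mul (tendsto_const_nhds.mul ((Complex.continuous_normSq.tendsto _).comp hcu))
    have := le_of_tendsto_of_tendsto' hL hR hineq
    simpa using this
  -- the Cayley difference function
  set Q : ℂ → ℂ := fun w => (1 + f w) / (1 - f w) - (1 + w) / (1 - w) with hQ_def
  have hfne : ∀ w ∈ unitDisk, (1:ℂ) - f w ≠ 0 := fun w hw => one_sub_ne_zero (hmaps hw)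
  have hwne : ∀ w ∈ unitDisk, (1:ℂ) - w ≠ 0 := fun w hw => one_sub_ne_zero hw
  have hQdiff : DifferentiableOn ℂ Q unitDisk := by
    apply DifferentiableOn.sub
    · exact ((differentiableOn_const _).add hf).div ((differentiableOn_const _).sub hf) hfne
    · exact ((differentiableOn_const _).add differentiableOn_id).div
        ((differentiableOn_const _).sub differentiableOn_id) hwne
  have hReQ : ∀ w ∈ unitDisk, 0 ≤ (Q w).re := by
    intro w hw
    have h1 := re_cayley (mem_ne_one (hmaps hw))
    have h2 := re_cayley (mem_ne_one hw)
    have hreq : (Q w).re = (1 - Complex.normSq (f w)) / Complex.normSq (1 - f w)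
        - (1 - Complex.normSq w) / Complex.normSq (1 - w) := by
      rw [hQ_def]
      simp only [Complex.sub_re]
      rw [h1, h2]
    rw [hreq, sub_nonneg,
      div_le_div_iff₀ (Complex.normSq_pos.mpr (hwne w hw)) (Complex.normSq_pos.mpr (hfne w hw))]
    exact hjulia w hw
  have hQu_eq : ∀ n, Q (u n) = 2 * (f (u n) - u n) / ((1 - f (u n)) * (1 - u n)) := by
    intro n
    rw [hQ_def]
    exact cayley_sub (mem_ne_one (hmaps (hu_mem n))) (mem_ne_one (hu_mem n))
  have hQu_abs : ∀ n, ‖Q (u n)‖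
      = 2 * (ε n * d n ^ 3) / (‖1 - f (u n)‖ * d n) := by
    intro n
    rw [hQu_eq n, norm_div, norm_mul, norm_mul, habs1u n, Complex.norm_two, hEeq n]
  have hQδ : Tendsto (fun n => ‖Q (u n)‖ / d n) atTop (𝓝 0) := by
    apply squeeze_zero' (g := fun n => 4 * ε n) (Eventually.of_forall fun n => by positivity)
    · filter_upwards [hε.eventually (gt_mem_nhds (by norm_num : (0:ℝ) < 1/2))] with n hn
      have habsun : ‖u n‖ = 1 - d n := by
        rw [hu_def]
        rw [Complex.norm_real, Real.norm_eq_abs]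
        exact _root_.abs_of_nonneg (by linarith [hd_le n])
      have htri : ‖1 - u n‖ ≤ ‖1 - f (u n)‖ + ‖f (u n) - u n‖ := by
        calc ‖1 - u n‖ = ‖(1 - f (u n)) + (f (u n) - u n)‖ := by
              congr 1; ring
          _ ≤ _ := norm_add_le _ _
      have hlb : d n / 2 ≤ ‖1 - f (u n)‖ := by
        rw [habs1u n] at htri
        rw [hEeq n] at htri
        have hd1 : d n ≤ 1 := le_trans (hd_le n) (by norm_num)
        have h7 : d n ^ 2 ≤ 1 := by nlinarith [hd_pos n]
        have hb1 : ε n * d n ^ 3 ≤ 1/2 * d n ^ 3 :=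
          mul_le_mul_of_nonneg_right hn.le (by positivity)
        have hb2 : (1:ℝ)/2 * d n ^ 3 ≤ 1/2 * d n := by
          nlinarith [mul_le_mul_of_nonneg_left h7 (hd_pos n).le]
        linarith [htri, hb1, hb2]
      have hfpos : (0:ℝ) < ‖1 - f (u n)‖ :=
        lt_of_lt_of_le (by positivity) hlb
      rw [hQu_abs n, div_div,
        div_le_iff₀ (mul_pos (mul_pos hfpos (hd_pos n)) (hd_pos n))]
      have h8 := mul_le_mul_of_nonneg_left hlb
        (show (0:ℝ) ≤ 4 * ε n * (d n * d n) by positivity)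
      nlinarith [h8]
    · simpa using hε.const_mul 4
  have hQu0 : Tendsto (fun n => Q (u n)) atTop (𝓝 0) := by
    rw [tendsto_zero_iff_norm_tendsto_zero]
    have h9 : Tendsto (fun n => ‖Q (u n)‖ / d n * d n) atTop (𝓝 0) := by
      simpa using hQδ.mul hd0
    apply h9.congr
    intro n
    rw [div_mul_cancel₀ _ (hd_pos n).ne']
  intro z hz
  suffices hQz : Q z = 0 by
    simp only [hQ_def] at hQz
    rw [sub_eq_zero] at hQz
    have h2 := (div_eq_div_iff (hfne z hz) (hwne z hz)).mp hQz
    linear_combination h2 / 2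
  by_cases hcase : ∃ z₀ ∈ unitDisk, (Q z₀).re = 0
  · obtain ⟨z₀, hz₀, hre0⟩ := hcase
    set k : ℂ → ℂ := fun w => (Q w - 1) / (Q w + 1) with hk_def
    have hden1 : ∀ w ∈ unitDisk, Q w + 1 ≠ 0 := by
      intro w hw hcontr
      have h10 : (Q w + 1).re = 0 := by rw [hcontr]; simp
      rw [Complex.add_re, Complex.one_re] at h10
      linarith [hReQ w hw]
    have hkdiff : DifferentiableOn ℂ k unitDisk :=
      (hQdiff.sub (differentiableOn_const _)).div (hQdiff.add (differentiableOn_const _)) hden1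
    have habsk0 : ‖k z₀‖ = 1 := by
      rw [hk_def]
      simp only []
      rw [norm_div]
      have h := normSq_pm_one (Q z₀)
      have h2 : Complex.normSq (Q z₀ - 1) = Complex.normSq (Q z₀ + 1) := by
        rw [hre0] at h; linarith
      rw [Complex.norm_def, Complex.norm_def, h2, div_self]
      exact Real.sqrt_ne_zero'.mpr (Complex.normSq_pos.mpr (hden1 z₀ hz₀))
    have hmax : IsMaxOn (norm ∘ k) unitDisk z₀ := by
      rw [isMaxOn_iff]
      intro w hw
      simp only [Function.comp_apply]
      rw [habsk0, hk_def]
      simp only []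
      rw [norm_div, div_le_one (norm_pos_iff.mpr (hden1 w hw))]
      have h := normSq_pm_one (Q w)
      have h2 : Complex.normSq (Q w - 1) ≤ Complex.normSq (Q w + 1) := by
        linarith [hReQ w hw]
      rw [Complex.norm_def, Complex.norm_def]
      exact Real.sqrt_le_sqrt h2
    have heqk := Complex.eqOn_of_isPreconnected_of_isMaxOn_norm hconn hopen hkdiff hz₀ hmax
    have hQconst : ∀ w ∈ unitDisk, Q w = Q z₀ := by
      intro w hw
      have h11 : k w = k z₀ := by
        have := heqk hw
        simp only [Function.const_apply] at this
        rw [this]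
      rw [hk_def] at h11
      simp only [] at h11
      have h12 := (div_eq_div_iff (hden1 w hw) (hden1 z₀ hz₀)).mp h11
      linear_combination h12 / 2
    have hconstseq : (fun n => Q (u n)) = fun _ => Q z₀ :=
      funext fun n => hQconst _ (hu_mem n)
    have hQz₀ : Q z₀ = 0 := by
      apply tendsto_nhds_unique _ hQu0
      rw [hconstseq]
      exact tendsto_const_nhds
    rw [hQconst z hz, hQz₀]
  · push_neg at hcase
    have hpos : ∀ w ∈ unitDisk, 0 < (Q w).re := fun w hw =>
      lt_of_le_of_ne (hReQ w hw) (Ne.symm (hcase w hw))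
    have h0mem : (0:ℂ) ∈ unitDisk := by
      show ‖0‖ < 1
      simp
    set a : ℂ := Q 0 with ha_def
    have ha_pos : 0 < a.re := hpos 0 h0mem
    set h : ℂ → ℂ := fun w => (Q w - a) / (Q w + (starRingEnd ℂ) a) with hh_def
    have hden2 : ∀ w ∈ unitDisk, Q w + (starRingEnd ℂ) a ≠ 0 := by
      intro w hw hcontr
      have h10 : (Q w + (starRingEnd ℂ) a).re = 0 := by rw [hcontr]; simp
      rw [Complex.add_re, Complex.conj_re] at h10
      linarith [hpos w hw]
    have hhdiff : DifferentiableOn ℂ h unitDisk :=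
      (hQdiff.sub (differentiableOn_const _)).div (hQdiff.add (differentiableOn_const _)) hden2
    have hh0 : h 0 = 0 := by
      rw [hh_def]
      simp [ha_def]
    have hhm : Set.MapsTo h unitDisk unitDisk := by
      intro w hw
      show ‖_‖ < 1
      rw [hh_def]
      simp only []
      rw [norm_div, div_lt_one (norm_pos_iff.mpr (hden2 w hw))]
      have hid := normSq_pm_conj (Q w) a
      have h2 : Complex.normSq (Q w - a) < Complex.normSq (Q w + (starRingEnd ℂ) a) := by
        nlinarith [hpos w hw, ha_pos]
      rw [Complex.norm_def, Complex.norm_def]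
      exact Real.sqrt_lt_sqrt (Complex.normSq_nonneg _) h2
    have hsch : ∀ w ∈ unitDisk, ‖h w‖ ≤ ‖w‖ := by
      intro w hw
      rw [unitDisk_eq] at hhdiff hhm
      exact Complex.norm_le_norm_of_mapsTo_ball hhdiff (hhm.mono_right ball_subset_closedBall) hh0 hw
    have hkey : ∀ n, Complex.normSq (Q (u n) + (starRingEnd ℂ) a)
        ≤ 4 * a.re * (‖Q (u n)‖ / d n) := by
      intro n
      have h1 := hsch (u n) (hu_mem n)
      have habsun : ‖u n‖ = 1 - d n := by
        rw [hu_def]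
        rw [Complex.norm_real, Real.norm_eq_abs]
        exact _root_.abs_of_nonneg (by linarith [hd_le n])
      have hnsqpos := Complex.normSq_pos.mpr (hden2 _ (hu_mem n))
      have h2 : Complex.normSq (Q (u n) - a)
          ≤ (1 - d n) * (1 - d n) * Complex.normSq (Q (u n) + (starRingEnd ℂ) a) := by
        have h3 := mul_self_le_mul_self (norm_nonneg _) h1
        rw [habsun] at h3
        simp only [hh_def] at h3
        rw [cmul_self_norm, Complex.normSq_div] at h3
        rw [div_le_iff₀ hnsqpos] at h3
        linarith [h3]
      have h4 := normSq_pm_conj (Q (u n)) a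
      have h5 : d n * Complex.normSq (Q (u n) + (starRingEnd ℂ) a)
          ≤ 4 * (Q (u n)).re * a.re := by
        nlinarith [h2, h4, mul_nonneg (mul_nonneg
          (Complex.normSq_nonneg (Q (u n) + (starRingEnd ℂ) a)) (hd_pos n).le)
          (by linarith [hd_le n] : (0:ℝ) ≤ 1 - d n)]
      have h6 : (Q (u n)).re ≤ ‖Q (u n)‖ := Complex.re_le_norm _
      rw [show 4 * a.re * (‖Q (u n)‖ / d n)
        = (4 * a.re * ‖Q (u n)‖) / d n by ring, le_div_iff₀ (hd_pos n)]
      nlinarith [h5, mul_le_mul_of_nonneg_left h6 (by linarith : (0:ℝ) ≤ 4 * a.re)]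
    have hLn : Tendsto (fun n => Complex.normSq (Q (u n) + (starRingEnd ℂ) a)) atTop
        (𝓝 (Complex.normSq ((starRingEnd ℂ) a))) := by
      apply (Complex.continuous_normSq.tendsto _).comp
      simpa using hQu0.add (tendsto_const_nhds (x := (starRingEnd ℂ) a))
    have hRn : Tendsto (fun n => 4 * a.re * (‖Q (u n)‖ / d n)) atTop (𝓝 0) := by
      simpa using hQδ.const_mul (4 * a.re)
    have hfin := le_of_tendsto_of_tendsto' hLn hRn hkey
    rw [Complex.normSq_conj] at hfin
    have ha0 : a = 0 :=
      Complex.normSq_eq_zero.mp (le_antisymm hfin (Complex.normSq_nonneg a))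
    rw [ha0] at ha_pos
    simp at ha_pos
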